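/- Let k be a positive integer and let C_n(x;k+1) be the (k+1)-order Eulerian polynomials defined by C_0 = 1 and C_{n+1}(x;k+1) = ((k+1)n+1)x C_n(x;k+1) + x(1-x) C_n'(x;k+1). Then for all n ≥ 1, (x/(1-x)^k · d/dx)^n (1/(1-x)) = C_n(x;k+1)/(1-x)^{n+kn+1}. -/

import Mathlib

/-- For the `(k+1)`-order Eulerian polynomials `C_n(x;k+1)` defined by the recurrence
`C_{n+1} = ((k+1)n+1) x C_n + x(1-x) C_n'` with `C_0 = 1`, one has
`(x/(1-x)^k d/dx)^n (1/(1-x)) = C_n(x;k+1)/(1-x)^{n+kn+1}`. -/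
theorem xD_pow_k_order_eulerian (k : ℕ) (hk : 1 ≤ k) (Cp : ℕ → Polynomial ℝ)
    (h0 : Cp 0 = 1)
    (hrec : ∀ n : ℕ, Cp (n + 1) =
        Polynomial.C (((k + 1) * n + 1 : ℕ) : ℝ) * (Polynomial.X * Cp n)
          + Polynomial.X * (1 - Polynomial.X) * Polynomial.derivative (Cp n))
    (n : ℕ) (hn : 1 ≤ n) (x : ℝ) (hx : x ≠ 1) :
    ((fun g : ℝ → ℝ => fun y => (y / (1 - y) ^ k) * deriv g y)^[n] (fun y => 1 / (1 - y))) x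
      = (Cp n).eval x / (1 - x) ^ (n + k * n + 1) := by
  clear hn
  induction n generalizing x with
  | zero => simp [h0]
  | succ n ih =>
    rw [Function.iterate_succ_apply']
    have h1y : (1 : ℝ) - x ≠ 0 := sub_ne_zero.mpr (Ne.symm hx)
    have heq : ((fun g : ℝ → ℝ => fun y => (y / (1 - y) ^ k) * deriv g y)^[n]
        (fun y => 1 / (1 - y))) =ᶠ[nhds x]
        fun z => (Cp n).eval z / (1 - z) ^ (n + k * n + 1) := by
      filter_upwards [isOpen_ne.mem_nhds hx] with z hz using ih z hz
    have hQ : HasDerivAt (fun z : ℝ => (1 - z) ^ (n + k * n + 1))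
        (((n + k * n + 1 : ℕ) : ℝ) * (1 - x) ^ (n + k * n) * (-1)) x := by
      have := ((hasDerivAt_id x).const_sub 1).fun_pow (n + k * n + 1)
      simpa using this
    have hd : HasDerivAt (fun z => (Cp n).eval z / (1 - z) ^ (n + k * n + 1))
        (((Cp n).derivative.eval x * (1 - x) ^ (n + k * n + 1)
          - (Cp n).eval x * (((n + k * n + 1 : ℕ) : ℝ) * (1 - x) ^ (n + k * n) * (-1)))
          / ((1 - x) ^ (n + k * n + 1)) ^ 2) x :=
      ((Cp n).hasDerivAt x).div hQ (pow_ne_zero _ h1y)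
    rw [heq.deriv_eq, hd.deriv]
    rw [hrec n]
    simp only [Polynomial.eval_add, Polynomial.eval_mul, Polynomial.eval_C, Polynomial.eval_X,
      Polynomial.eval_sub, Polynomial.eval_one]
    push_cast
    field_simp
    ring
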